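/- Weyl differencing: for an integer k ≥ 2, K = 2^{k−1}, X ≥ 1, an interval I of length at most X, a real-valued function g on ℤ, and a real polynomial f, one has |Σ_{m ∈ I} g(m) e(f(m))|^K ≪ X^{K−k} · Σ_{|u_1|,...,|u_{k−1}| ≤ X} Σ_{m : (∗)} ∇(g(m); u_1,...,u_{k−1}) e(Δ(f(m); u_1,...,u_{k−1})), where (∗) requires m + Σ_{u ∈ 𝒰} u ∈ I for every subset 𝒰 ⊆ {u_1,...,u_{k−1}}. -/

import Mathlib

open Finset Complex

noncomputable def ee (x : ℝ) : ℂ := Complex.exp (2 * Real.pi * Complex.I * x)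

/-- forward difference `Δ(f; u)(n) = f(n+u) - f(n)` on functions -/
def fdiff (f : ℤ → ℝ) (u : ℤ) : ℤ → ℝ := fun n => f (n + u) - f n

/-- iterated forward difference -/
def fdiffs (f : ℤ → ℝ) : List ℤ → ℤ → ℝ
  | [] => f
  | u :: us => fdiffs (fdiff f u) us

/-- multiplicative difference `∇(g; u)(n) = g(n+u)·g(n)` -/
def mdiff (g : ℤ → ℝ) (u : ℤ) : ℤ → ℝ := fun n => g (n + u) * g n

/-- iterated multiplicative difference -/
def mdiffs (g : ℤ → ℝ) : List ℤ → ℤ → ℝ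
  | [] => g
  | u :: us => mdiffs (mdiff g u) us

lemma ee_add (x y : ℝ) : ee (x + y) = ee x * ee y := by
  rw [ee, ee, ee, ← Complex.exp_add]; congr 1; push_cast; ring

lemma conj_ee (x : ℝ) : (starRingEnd ℂ) (ee x) = ee (-x) := by
  rw [ee, ← Complex.exp_conj]; congr 1
  simp only [map_mul, Complex.conj_I, Complex.conj_ofReal, map_ofNat]; push_cast; ring

lemma expand (X : ℝ) (a b : ℤ) (hab : b - a ≤ ⌊X⌋) (g F : ℤ → ℝ) :
    (‖∑ m ∈ Icc a b, (g m : ℂ) * ee (F m)‖) ^ 2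
    = (∑ u ∈ Icc (-⌊X⌋) ⌊X⌋, ∑ m ∈ (Icc a b).filter (fun m => m + u ∈ Icc a b),
        ((mdiff g u m : ℝ) : ℂ) * ee (fdiff F u m)).re := by
  set z : ℤ → ℂ := fun m => (g m : ℂ) * ee (F m) with hz
  set S := ∑ m ∈ Icc a b, z m with hS
  have habs : ‖S‖ ^ 2 = ((starRingEnd ℂ) S * S).re := by
    rw [mul_comm, Complex.mul_conj]; simp [Complex.sq_norm]
  rw [habs]
  congr 1
  have hterm : ∀ m u : ℤ, (starRingEnd ℂ) (z m) * z (m + u)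
      = ((mdiff g u m : ℝ) : ℂ) * ee (fdiff F u m) := by
    intro m u
    simp only [hz, map_mul, Complex.conj_ofReal, conj_ee, mdiff, fdiff]
    rw [show F (m+u) - F m = -F m + F (m+u) by ring, ee_add]
    push_cast; ring
  calc (starRingEnd ℂ) S * S
      = ∑ m ∈ Icc a b, ∑ m' ∈ Icc a b, (starRingEnd ℂ) (z m) * z m' := by
        rw [hS, map_sum, Finset.sum_mul_sum]
    _ = ∑ m ∈ Icc a b, ∑ u ∈ (Icc (-⌊X⌋) ⌊X⌋).filter (fun u => m + u ∈ Icc a b),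
          (starRingEnd ℂ) (z m) * z (m + u) := by
        refine Finset.sum_congr rfl (fun m hm => ?_)
        refine Finset.sum_nbij' (i := fun m' => m' - m) (j := fun u => m + u) ?_ ?_ ?_ ?_ ?_
        · intro m' hm'
          simp only [mem_filter, mem_Icc] at *
          omega
        · intro u hu
          simp only [mem_filter, mem_Icc] at *
          omega
        · intro m' _; omega
        · intro u _; omega
        · intro m' _; rw [show m + (m' - m) = m' by omega]
    _ = ∑ m ∈ Icc a b, ∑ u ∈ Icc (-⌊X⌋) ⌊X⌋,
          if m + u ∈ Icc a b then (starRingEnd ℂ) (z m) * z (m + u) else 0 := by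
        refine Finset.sum_congr rfl (fun m hm => ?_)
        rw [Finset.sum_filter]
    _ = ∑ u ∈ Icc (-⌊X⌋) ⌊X⌋, ∑ m ∈ (Icc a b).filter (fun m => m + u ∈ Icc a b),
          (starRingEnd ℂ) (z m) * z (m + u) := by
        rw [Finset.sum_comm]
        exact Finset.sum_congr rfl (fun u hu => (Finset.sum_filter _ _).symm)
    _ = _ := by
        exact Finset.sum_congr rfl fun u _ => Finset.sum_congr rfl fun m _ => hterm m u

lemma sum_piFinset_cons {M : Type*} [AddCommMonoid M] (n : ℕ) (s : Finset ℤ)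
    (F : (Fin (n+1) → ℤ) → M) :
    ∑ w ∈ Fintype.piFinset (fun _ : Fin (n+1) => s), F w
      = ∑ u ∈ s, ∑ v ∈ Fintype.piFinset (fun _ : Fin n => s), F (Fin.cons u v) := by
  rw [← Finset.sum_product']
  refine Finset.sum_nbij' (i := fun w => (w 0, Fin.tail w)) (j := fun p => Fin.cons p.1 p.2)
    ?_ ?_ ?_ ?_ ?_
  · intro w hw
    simp only [Fintype.mem_piFinset] at hw
    simp [Finset.mem_product, Fintype.mem_piFinset, Fin.tail, hw]
  · intro p hp
    simp only [Finset.mem_product, Fintype.mem_piFinset] at hp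
    simp only [Fintype.mem_piFinset]
    intro i
    refine Fin.cases ?_ ?_ i
    · simpa using hp.1
    · intro j; simpa using hp.2 j
  · intro w _; exact Fin.cons_self_tail w
  · intro p _; simp
  · intro w _; rw [Fin.cons_self_tail]

lemma sum_cons_subset (n : ℕ) (u : ℤ) (v : Fin n → ℤ) (U : Finset (Fin (n+1))) :
    ∑ i ∈ U, Fin.cons u v i
      = (if (0 : Fin (n+1)) ∈ U then u else 0)
        + ∑ j ∈ Finset.univ.filter (fun j => Fin.succ j ∈ U), v j := by
  have h1 : ∑ i ∈ U, Fin.cons u v i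
      = ∑ i : Fin (n+1), if i ∈ U then Fin.cons u v i else 0 := by
    rw [Finset.sum_ite_mem, Finset.univ_inter]
  rw [h1, Fin.sum_univ_succ, Finset.sum_filter]
  simp [Fin.cons_succ]

lemma cond_equiv (n : ℕ) (a b u : ℤ) (v : Fin n → ℤ) (m : ℤ) :
    (∀ U : Finset (Fin n), m + ∑ i ∈ U, v i ∈ Icc (max a (a-u)) (min b (b-u)))
      ↔ (∀ U : Finset (Fin (n+1)), m + ∑ i ∈ U, Fin.cons u v i ∈ Icc a b) := by
  constructor
  · intro hL U'
    rw [sum_cons_subset]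
    have h := hL (Finset.univ.filter (fun j => Fin.succ j ∈ U'))
    simp only [mem_Icc, le_max_iff, max_le_iff, le_min_iff, min_le_iff] at h ⊢
    split_ifs with h0 <;> omega
  · intro hR U
    have hmem : ∀ j : Fin n, Fin.succ j ∈ U.image Fin.succ ↔ j ∈ U := by
      intro j
      simp only [Finset.mem_image]
      constructor
      · rintro ⟨x, hx, he⟩
        rwa [← Fin.succ_injective _ he]
      · exact fun h => ⟨j, h, rfl⟩
    have hf1 : Finset.univ.filter (fun j => Fin.succ j ∈ U.image Fin.succ) = U := by
      ext j; simp [hmem j]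
    have hf2 : Finset.univ.filter
        (fun j => Fin.succ j ∈ insert (0 : Fin (n+1)) (U.image Fin.succ)) = U := by
      ext j; simp [hmem j, Fin.succ_ne_zero]
    have h1 := hR (U.image Fin.succ)
    have h2 := hR (insert (0 : Fin (n+1)) (U.image Fin.succ))
    rw [sum_cons_subset, hf1, if_neg (by simp [Fin.succ_ne_zero, eq_comm])] at h1
    rw [sum_cons_subset, hf2, if_pos (Finset.mem_insert_self _ _)] at h2
    simp only [mem_Icc, le_max_iff, max_le_iff, le_min_iff, min_le_iff] at h1 h2 ⊢
    omega

lemma filter_eq_Icc (a b u : ℤ) :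
    (Icc a b).filter (fun m => m + u ∈ Icc a b) = Icc (max a (a-u)) (min b (b-u)) := by
  ext m
  simp only [mem_filter, mem_Icc, le_max_iff, max_le_iff, le_min_iff, min_le_iff]
  omega

lemma poly_fdiff (f : Polynomial ℝ) (u : ℤ) :
    (fun n : ℤ => (f.comp (Polynomial.X + Polynomial.C (u:ℝ)) - f).eval (n : ℝ))
      = fdiff (fun m : ℤ => f.eval (m : ℝ)) u := by
  funext n
  simp only [fdiff, Polynomial.eval_sub, Polynomial.eval_comp, Polynomial.eval_add,
    Polynomial.eval_X, Polynomial.eval_C]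
  push_cast
  ring_nf

noncomputable def RHS (n : ℕ) (X : ℝ) (a b : ℤ) (g : ℤ → ℝ) (F : ℤ → ℝ) : ℝ :=
  (∑ u ∈ Fintype.piFinset (fun _ : Fin n => Finset.Icc (-⌊X⌋) ⌊X⌋),
    ∑ m ∈ (Finset.Icc a b).filter
        (fun m => ∀ U : Finset (Fin n), m + ∑ i ∈ U, u i ∈ Finset.Icc a b),
      ((mdiffs g (List.ofFn u) m : ℝ) : ℂ) * ee (fdiffs F (List.ofFn u) m)).re

lemma RHS_one (X : ℝ) (a b : ℤ) (g F : ℤ → ℝ) :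
    RHS 1 X a b g F
      = (∑ u ∈ Icc (-⌊X⌋) ⌊X⌋, ∑ m ∈ (Icc a b).filter (fun m => m + u ∈ Icc a b),
          ((mdiff g u m : ℝ) : ℂ) * ee (fdiff F u m)).re := by
  unfold RHS
  congr 1
  refine Finset.sum_nbij' (i := fun w => w 0) (j := fun u => fun _ : Fin 1 => u)
    ?_ ?_ ?_ ?_ ?_
  · intro w hw; simp only [Fintype.mem_piFinset] at hw; exact hw 0
  · intro u hu; simp [Fintype.mem_piFinset, hu]
  · intro w _; funext i; exact congrArg w (Subsingleton.elim 0 i)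
  · intro u _; rfl
  · intro w hw
    have hofn : List.ofFn w = [w 0] := by
      rw [List.ofFn_succ]; simp
    rw [hofn]
    have hfil : (Icc a b).filter
          (fun m => ∀ U : Finset (Fin 1), m + ∑ i ∈ U, w i ∈ Icc a b)
        = (Icc a b).filter (fun m => m + w 0 ∈ Icc a b) := by
      ext m
      simp only [mem_filter, and_congr_right_iff]
      intro hm
      constructor
      · intro h; simpa using h {0}
      · intro h U
        have hU : U = ∅ ∨ U = {0} := by
          refine Finset.subset_singleton_iff.mp ?_
          intro x _
          simp only [Finset.mem_singleton]
          exact Subsingleton.elim _ _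
        rcases hU with rfl | rfl
        · simpa using hm
        · simpa using h
    rw [hfil]
    rfl

lemma aux (n : ℕ) (hn : 1 ≤ n) :
    ∃ C : ℝ, 0 < C ∧ ∀ X : ℝ, 1 ≤ X → ∀ a b : ℤ, ((b - a : ℤ) : ℝ) ≤ X →
      ∀ g : ℤ → ℝ, ∀ f : Polynomial ℝ,
      (‖∑ m ∈ Finset.Icc a b, (g m : ℂ) * ee (f.eval (m : ℝ))‖) ^ (2 ^ n)
        ≤ C * X ^ ((2 ^ n : ℝ) - (n + 1)) * RHS n X a b g (fun m => f.eval (m : ℝ)) := by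
  induction n, hn using Nat.le_induction with
  | base =>
    refine ⟨1, one_pos, ?_⟩
    intro X hX a b hab g f
    have hab' : b - a ≤ ⌊X⌋ := Int.le_floor.2 hab
    rw [show (2:ℕ)^1 = 2 from rfl, show ((2:ℝ)^1 - ((1:ℕ) + 1) : ℝ) = 0 by norm_num,
      Real.rpow_zero, expand X a b hab' g (fun m => f.eval (m:ℝ)), ← RHS_one]
    simp

  | succ n hn ih =>
    obtain ⟨C, hC, hIH⟩ := ih
    refine ⟨3 ^ (2 ^ n) * C, by positivity, ?_⟩
    intro X hX a b hab g f
    have hx0 : (0:ℝ) < X := by linarith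
    have hfl : (1:ℤ) ≤ ⌊X⌋ := Int.le_floor.2 (by exact_mod_cast hX)
    have hab' : b - a ≤ ⌊X⌋ := Int.le_floor.2 hab
    set F : ℤ → ℝ := fun m => f.eval (m : ℝ) with hF
    set J : Finset ℤ := Icc (-⌊X⌋) ⌊X⌋ with hJ
    set t : ℤ → ℝ := fun u => ‖
      (∑ m ∈ (Icc a b).filter (fun m => m + u ∈ Icc a b),
        ((mdiff g u m : ℝ) : ℂ) * ee (fdiff F u m))‖ with ht
    -- Step 1
    have h1 : ‖∑ m ∈ Icc a b, (g m : ℂ) * ee (F m)‖ ^ 2 ≤ ∑ u ∈ J, t u := by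
      rw [expand X a b hab' g F, Complex.re_sum]
      exact Finset.sum_le_sum fun u _ => Complex.re_le_norm _
    -- Step 2
    have h2 : ∀ u : ℤ, t u ^ (2 ^ n)
        ≤ C * X ^ ((2 ^ n : ℝ) - (n + 1))
          * RHS n X (max a (a-u)) (min b (b-u)) (mdiff g u) (fdiff F u) := by
      intro u
      have hb' : ((min b (b-u) - max a (a-u) : ℤ) : ℝ) ≤ X := by
        have h : (min b (b-u) - max a (a-u) : ℤ) ≤ b - a := by omega
        calc ((min b (b-u) - max a (a-u) : ℤ) : ℝ) ≤ ((b - a : ℤ) : ℝ) := by exact_mod_cast h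
          _ ≤ X := hab
      have h := hIH X hX (max a (a-u)) (min b (b-u)) hb' (mdiff g u)
        (f.comp (Polynomial.X + Polynomial.C (u:ℝ)) - f)
      rw [ht]
      simp only []
      rw [filter_eq_Icc a b u, hF, ← poly_fdiff f u]
      exact h
    -- nonnegativity of the inner RHS
    have hE : (0:ℝ) < X ^ ((2 ^ n : ℝ) - (n + 1)) := Real.rpow_pos_of_pos hx0 _
    have hRnn : ∀ u : ℤ,
        0 ≤ RHS n X (max a (a-u)) (min b (b-u)) (mdiff g u) (fdiff F u) := by
      intro u
      have h := h2 u
      have h0 : (0:ℝ) ≤ t u ^ (2 ^ n) := pow_nonneg (norm_nonneg _) _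
      nlinarith [mul_pos hC hE]
    -- Step 3 : power mean
    have h3 : (∑ u ∈ J, t u) ^ (2 ^ n)
        ≤ (J.card : ℝ) ^ (2 ^ n - 1) * ∑ u ∈ J, t u ^ (2 ^ n) := by
      have h := pow_sum_le_card_mul_sum_pow (s := J) (f := t)
        (fun i _ => norm_nonneg _) (2 ^ n - 1)
      rwa [Nat.sub_add_cancel Nat.one_le_two_pow] at h
    -- Step 4
    have h4 : ∑ u ∈ J, t u ^ (2 ^ n)
        ≤ C * X ^ ((2 ^ n : ℝ) - (n + 1))
          * ∑ u ∈ J, RHS n X (max a (a-u)) (min b (b-u)) (mdiff g u) (fdiff F u) := by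
      rw [Finset.mul_sum]
      exact Finset.sum_le_sum fun u _ => h2 u
    -- Step 5 : reassemble the RHS
    have h5 : ∑ u ∈ J, RHS n X (max a (a-u)) (min b (b-u)) (mdiff g u) (fdiff F u)
        = RHS (n+1) X a b g F := by
      unfold RHS
      rw [sum_piFinset_cons n (Icc (-⌊X⌋) ⌊X⌋)]
      rw [Complex.re_sum]
      refine Finset.sum_congr rfl (fun u hu => ?_)
      congr 1
      refine Finset.sum_congr rfl (fun v hv => ?_)
      have hofn : List.ofFn (Fin.cons u v) = u :: List.ofFn v := by
        rw [List.ofFn_succ]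
        simp [Fin.cons_succ]
      have hfil : (Icc a b).filter
            (fun m => ∀ U : Finset (Fin (n+1)), m + ∑ i ∈ U, Fin.cons u v i ∈ Icc a b)
          = (Icc (max a (a-u)) (min b (b-u))).filter
            (fun m => ∀ U : Finset (Fin n),
              m + ∑ i ∈ U, v i ∈ Icc (max a (a-u)) (min b (b-u))) := by
        ext m
        simp only [mem_filter]
        constructor
        · intro hmem
          have hc := (cond_equiv n a b u v m).2 hmem.2
          refine ⟨by simpa using hc ∅, hc⟩
        · intro hmem
          have hc := (cond_equiv n a b u v m).1 hmem.2
          refine ⟨?_, hc⟩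
          have := hc ∅
          simp only [Finset.sum_empty, add_zero] at this
          simp only [mem_Icc, le_max_iff, max_le_iff, le_min_iff, min_le_iff, mem_Icc] at *
          omega
      rw [hofn, hfil]
      rfl
    -- cardinality bound
    have hcard : (J.card : ℝ) ≤ 3 * X := by
      have hcz : (J.card : ℤ) = 2 * ⌊X⌋ + 1 := by
        rw [hJ, Int.card_Icc]
        omega
      have hcr : (J.card : ℝ) = 2 * (⌊X⌋ : ℝ) + 1 := by exact_mod_cast hcz
      have := Int.floor_le X
      linarith
    have hRnn' : 0 ≤ RHS (n+1) X a b g F := by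
      rw [← h5]
      exact Finset.sum_nonneg fun u _ => hRnn u
    -- final assembly
    have hA2 : ‖∑ m ∈ Icc a b, (g m : ℂ) * ee (F m)‖ ^ (2 ^ (n+1))
        = (‖∑ m ∈ Icc a b, (g m : ℂ) * ee (F m)‖ ^ 2) ^ (2 ^ n) := by
      rw [← pow_mul]
      congr 1
      ring
    calc ‖∑ m ∈ Icc a b, (g m : ℂ) * ee (F m)‖ ^ (2 ^ (n+1))
        = (‖∑ m ∈ Icc a b, (g m : ℂ) * ee (F m)‖ ^ 2) ^ (2 ^ n) := hA2
      _ ≤ (∑ u ∈ J, t u) ^ (2 ^ n) := by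
          exact pow_le_pow_left₀ (sq_nonneg _) h1 _
      _ ≤ (J.card : ℝ) ^ (2 ^ n - 1) * ∑ u ∈ J, t u ^ (2 ^ n) := h3
      _ ≤ (J.card : ℝ) ^ (2 ^ n - 1)
            * (C * X ^ ((2 ^ n : ℝ) - (n + 1))
              * ∑ u ∈ J, RHS n X (max a (a-u)) (min b (b-u)) (mdiff g u) (fdiff F u)) := by
          refine mul_le_mul_of_nonneg_left h4 (by positivity)
      _ = ((J.card : ℝ) ^ (2 ^ n - 1) * (C * X ^ ((2 ^ n : ℝ) - (n + 1))))
            * RHS (n+1) X a b g F := by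
          rw [h5]; ring
      _ ≤ (3 ^ (2 ^ n) * C * X ^ ((2 ^ (n+1) : ℝ) - ((n+1 : ℕ) + 1)))
            * RHS (n+1) X a b g F := by
          refine mul_le_mul_of_nonneg_right ?_ hRnn'
          have hJc : (0:ℝ) ≤ (J.card : ℝ) := Nat.cast_nonneg _
          calc (J.card : ℝ) ^ (2 ^ n - 1) * (C * X ^ ((2 ^ n : ℝ) - (n + 1)))
              ≤ (3 * X) ^ (2 ^ n - 1) * (C * X ^ ((2 ^ n : ℝ) - (n + 1))) := by
                refine mul_le_mul_of_nonneg_right (pow_le_pow_left₀ hJc hcard _) (by positivity)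
            _ = 3 ^ (2 ^ n - 1) * C * (X ^ (2 ^ n - 1 : ℕ) * X ^ ((2 ^ n : ℝ) - (n + 1))) := by
                rw [mul_pow]; ring
            _ ≤ 3 ^ (2 ^ n) * C * (X ^ (2 ^ n - 1 : ℕ) * X ^ ((2 ^ n : ℝ) - (n + 1))) := by
                refine mul_le_mul_of_nonneg_right
                  (mul_le_mul_of_nonneg_right
                    (pow_le_pow_right₀ (by norm_num) (Nat.sub_le _ _)) hC.le)
                  (by positivity)
            _ = 3 ^ (2 ^ n) * C * X ^ ((2 ^ (n+1) : ℝ) - ((n+1 : ℕ) + 1)) := by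
                rw [← Real.rpow_natCast X (2 ^ n - 1), ← Real.rpow_add hx0]
                congr 1
                have h1n : (1:ℕ) ≤ 2 ^ n := Nat.one_le_two_pow
                push_cast [h1n]
                ring
      _ = 3 ^ (2 ^ n) * C * X ^ ((2 ^ (n+1) : ℝ) - ((n+1 : ℕ) + 1))
            * RHS (n+1) X a b g F := by ring

theorem weyl_differencing (k : ℕ) (hk : 2 ≤ k) :
    ∃ C : ℝ, 0 < C ∧ ∀ X : ℝ, 1 ≤ X → ∀ a b : ℤ, ((b - a : ℤ) : ℝ) ≤ X →
      ∀ g : ℤ → ℝ, ∀ f : Polynomial ℝ,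
      (‖∑ m ∈ Finset.Icc a b, (g m : ℂ) * ee (f.eval (m : ℝ))‖) ^ (2 ^ (k - 1))
        ≤ C * X ^ ((2 ^ (k - 1) : ℝ) - k) *
          (∑ u ∈ Fintype.piFinset (fun _ : Fin (k - 1) => Finset.Icc (-⌊X⌋) ⌊X⌋),
            ∑ m ∈ (Finset.Icc a b).filter
                (fun m => ∀ U : Finset (Fin (k - 1)),
                  m + ∑ i ∈ U, u i ∈ Finset.Icc a b),
              (mdiffs g (List.ofFn u) m : ℂ) *
                ee (fdiffs (fun n => f.eval (n : ℝ)) (List.ofFn u) m)).re := by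
  obtain ⟨C, hC, h⟩ := aux (k - 1) (by omega)
  refine ⟨C, hC, ?_⟩
  intro X hX a b hab g f
  have h' := h X hX a b hab g f
  have hcast : ((k - 1 : ℕ) : ℝ) + 1 = (k : ℝ) := by
    have h1 : (1:ℕ) ≤ k := by omega
    push_cast [h1]
    ring
  rw [hcast] at h'
  exact h'
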